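/- Let d ≥ 1 and let s = (s_1,…,s_d) be a sequence of positive integers with s_i ≤ s_{i+1} and s_{i+1} − s_i ≤ 1 for all 1 ≤ i ≤ d−1, and with s_d = d+1 (so that P_d^{(s)} has the unique interior lattice point p with p_j = j for all j), and set Q = P_d^{(s)} − p. Then the dual polytope Q^∨ = {y ∈ ℝ^d : ⟨x,y⟩ ≤ 1 for all x ∈ Q} is a lattice polytope, i.e. Q^∨ = conv(Q^∨ ∩ ℤ^d), if and only if for every 1 ≤ i ≤ d−1 the integer k_i = (i+1) s_i − i s_{i+1} divides both s_i and s_{i+1}. -/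

import Mathlib

open Pointwise BigOperators

/-- The `s`-lecture hall polytope
`P_d^(s) = {x ∈ ℝ^d : 0 ≤ x_1/s_1 ≤ x_2/s_2 ≤ ⋯ ≤ x_d/s_d ≤ 1}`
(indices shifted down by one: `x i` is the paper's `x_{i+1}`). -/
def lectureHall (d : ℕ) (s : Fin d → ℕ) : Set (Fin d → ℝ) :=
  {x | (∀ h : 0 < d, 0 ≤ x ⟨0, h⟩ / (s ⟨0, h⟩ : ℝ)) ∧
       (∀ i : Fin d, ∀ hi : (i : ℕ) + 1 < d,
          x i / (s i : ℝ) ≤ x ⟨(i : ℕ) + 1, hi⟩ / (s ⟨(i : ℕ) + 1, hi⟩ : ℝ)) ∧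
       (∀ h : 0 < d,
          x ⟨d - 1, Nat.sub_lt h Nat.one_pos⟩ / (s ⟨d - 1, Nat.sub_lt h Nat.one_pos⟩ : ℝ) ≤ 1)}

/-- The set of lattice points of `ℝ^d`. -/
def latticePoints (d : ℕ) : Set (Fin d → ℝ) := {x | ∀ i, ∃ n : ℤ, x i = (n : ℝ)}

/-- The dual polytope `Q^∨ = {y : ⟨x,y⟩ ≤ 1 for all x ∈ Q}`. -/
def dualPolytope {d : ℕ} (Q : Set (Fin d → ℝ)) : Set (Fin d → ℝ) :=
  {y | ∀ x ∈ Q, ∑ i, x i * y i ≤ 1}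

/-- A full-dimensional lattice polytope is reflexive if it is Fano (the only
lattice point of its interior is the origin) and its dual polytope is a lattice
polytope. -/
def IsReflexive {d : ℕ} (Q : Set (Fin d → ℝ)) : Prop :=
  interior Q ∩ latticePoints d = {0} ∧
  dualPolytope Q = convexHull ℝ (dualPolytope Q ∩ latticePoints d)

/-- Unimodular equivalence: `Q = f_U(P) + w` with `U` an integer matrix of
determinant `±1` and `w` an integer vector. -/
def UnimodularlyEquivalent {d : ℕ} (P Q : Set (Fin d → ℝ)) : Prop :=
  ∃ (U : Matrix (Fin d) (Fin d) ℤ) (w : Fin d → ℤ),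
    (U.det = 1 ∨ U.det = -1) ∧
    Q = (fun x => Matrix.vecMul x (U.map (fun a : ℤ => (a : ℝ))) + fun i => (w i : ℝ)) '' P

/-- `P` is Gorenstein of index `c`: `c` is the smallest positive integer such
that `cP` is unimodularly equivalent to a reflexive polytope. -/
def GorensteinOfIndex {d : ℕ} (P : Set (Fin d → ℝ)) (c : ℕ) : Prop :=
  0 < c ∧
  (∃ Q : Set (Fin d → ℝ), UnimodularlyEquivalent ((c : ℝ) • P) Q ∧ IsReflexive Q) ∧
  ∀ c' : ℕ, 0 < c' →
    (∃ Q : Set (Fin d → ℝ), UnimodularlyEquivalent ((c' : ℝ) • P) Q ∧ IsReflexive Q) →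
    c ≤ c'

/-- `P` is translation equivalent to a reflexive polytope. -/
def TranslationReflexive {d : ℕ} (P : Set (Fin d → ℝ)) : Prop :=
  ∃ w : Fin d → ℤ, IsReflexive ((fun x => x + fun i => (w i : ℝ)) '' P)

/-- With the conventions `e_0 = 0`, `s_0 = 1`, every position `0,…,d-1` of the
`s`-inversion sequence `e` is an ascent (`e i` is the paper's `e_{i+1}`). -/
def allAscents (d : ℕ) (s : Fin d → ℕ) (e : Fin d → ℤ) : Prop :=
  (∀ h : 0 < d, (0 : ℝ) / 1 < (e ⟨0, h⟩ : ℝ) / (s ⟨0, h⟩ : ℝ)) ∧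
  ∀ i : Fin d, ∀ hi : (i : ℕ) + 1 < d,
    (e i : ℝ) / (s i : ℝ) < (e ⟨(i : ℕ) + 1, hi⟩ : ℝ) / (s ⟨(i : ℕ) + 1, hi⟩ : ℝ)

/-- The integer decomposition property. -/
def HasIDP (d : ℕ) (P : Set (Fin d → ℝ)) : Prop :=
  ∀ k : ℕ, 0 < k → ∀ z : Fin d → ℤ,
    (fun i => (z i : ℝ)) ∈ (k : ℝ) • P →
    ∃ x : Fin k → Fin d → ℤ,
      (∀ j, (fun i => (x j i : ℝ)) ∈ P) ∧ ∀ i, (∑ j, x j i) = z i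

namespace Stmt11Aux

/-- two-term sum extraction -/
lemma sum_two {n : ℕ} (f : Fin n → ℝ) (i j : Fin n) (hij : i ≠ j)
    (h0 : ∀ k, k ≠ i → k ≠ j → f k = 0) : ∑ k, f k = f i + f j := by
  classical
  rw [← Finset.sum_pair hij]
  refine (Finset.sum_subset (Finset.subset_univ _) (fun k _ hk => ?_)).symm
  simp only [Finset.mem_insert, Finset.mem_singleton, not_or] at hk
  exact h0 k hk.1 hk.2

lemma sum_one {n : ℕ} (f : Fin n → ℝ) (i : Fin n)
    (h0 : ∀ k, k ≠ i → f k = 0) : ∑ k, f k = f i :=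
  Finset.sum_eq_single_of_mem i (Finset.mem_univ i) (fun k _ hk => h0 k hk)

variable (d : ℕ) (s : Fin d → ℕ)

noncomputable def sR : ℕ → ℝ := fun n => if h : n < d then (s ⟨n, h⟩ : ℝ) else 1
noncomputable def kk : ℕ → ℝ := fun t => ((t : ℝ) + 2) * sR d s t - ((t : ℝ) + 1) * sR d s (t + 1)
noncomputable def W : ℕ → Fin d → ℝ := fun m r => if m ≤ (r : ℕ) then sR d s r else 0
def pv : Fin d → ℝ := fun r => (r : ℕ) + 1
noncomputable def u : ℕ → Fin d → ℝ := fun m r => W d s m r - pv d r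
noncomputable def av : ℕ → Fin d → ℝ := fun m r =>
  if (r : ℕ) + 1 = m then (if m < d then sR d s m / kk d s (m - 1) else 1)
  else if (r : ℕ) = m then (if m = 0 then -1 else -(sR d s (m - 1) / kk d s (m - 1)))
  else 0
noncomputable def muv : ℕ → ℝ := fun m =>
  if m = 0 then 1 / sR d s 0
  else if m < d then kk d s (m - 1) / (sR d s (m - 1) * sR d s m)
  else 1 / ((d : ℝ) + 1)

noncomputable def Qset : Set (Fin d → ℝ) :=
  (fun x (j : Fin d) => x j - (((j : ℕ) : ℝ) + 1)) '' lectureHall d s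

variable {d s}

lemma sR_eq {n : ℕ} (h : n < d) : sR d s n = (s ⟨n, h⟩ : ℝ) := dif_pos h

lemma sR_pos (hpos : ∀ i, 0 < s i) (n : ℕ) : 0 < sR d s n := by
  unfold sR; split
  · exact_mod_cast hpos _
  · norm_num

lemma sR_ne (hpos : ∀ i, 0 < s i) (n : ℕ) : sR d s n ≠ 0 := ne_of_gt (sR_pos hpos n)

lemma sR_last (hd : 0 < d) (hlast : s ⟨d - 1, Nat.sub_lt hd Nat.one_pos⟩ = d + 1) :
    sR d s (d - 1) = (d : ℝ) + 1 := by
  rw [sR_eq (Nat.sub_lt hd Nat.one_pos), hlast]; push_cast; ring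

lemma sR_step (hstep : ∀ i : Fin d, ∀ hi : (i : ℕ) + 1 < d,
      s i ≤ s ⟨(i : ℕ) + 1, hi⟩ ∧ s ⟨(i : ℕ) + 1, hi⟩ - s i ≤ 1)
    {n : ℕ} (hn : n + 1 < d) :
    sR d s n ≤ sR d s (n + 1) ∧ sR d s (n + 1) ≤ sR d s n + 1 := by
  have h := hstep ⟨n, by omega⟩ hn
  simp only [Fin.val_mk] at h
  rw [sR_eq (show n < d by omega), sR_eq hn]
  constructor
  · exact_mod_cast h.1
  · have : s ⟨n + 1, hn⟩ ≤ s ⟨n, by omega⟩ + 1 := by omega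
    exact_mod_cast this

lemma sR_lb (hd : 0 < d)
    (hstep : ∀ i : Fin d, ∀ hi : (i : ℕ) + 1 < d,
      s i ≤ s ⟨(i : ℕ) + 1, hi⟩ ∧ s ⟨(i : ℕ) + 1, hi⟩ - s i ≤ 1)
    (hlast : s ⟨d - 1, Nat.sub_lt hd Nat.one_pos⟩ = d + 1) :
    ∀ n, n < d → (n : ℝ) + 2 ≤ sR d s n := by
  have key : ∀ m n, n < d → d - 1 - n = m → (n : ℝ) + 2 ≤ sR d s n := by
    intro m
    induction m with
    | zero =>
      intro n hn h0
      have hn' : n = d - 1 := by omega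
      subst hn'
      rw [sR_last hd hlast]
      have : ((d - 1 : ℕ) : ℝ) = (d : ℝ) - 1 := by
        have : (1 : ℕ) ≤ d := hd
        push_cast [Nat.cast_sub this]; ring
      rw [this]; linarith
    | succ m ih =>
      intro n hn h1
      have hn1 : n + 1 < d := by omega
      have h2 := (sR_step hstep hn1).2
      have h3 := ih (n + 1) hn1 (by omega)
      push_cast at h3
      linarith
  intro n hn; exact key (d - 1 - n) n hn rfl

lemma kk_pos (hd : 0 < d) (hpos : ∀ i, 0 < s i)
    (hstep : ∀ i : Fin d, ∀ hi : (i : ℕ) + 1 < d,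
      s i ≤ s ⟨(i : ℕ) + 1, hi⟩ ∧ s ⟨(i : ℕ) + 1, hi⟩ - s i ≤ 1)
    (hlast : s ⟨d - 1, Nat.sub_lt hd Nat.one_pos⟩ = d + 1)
    {t : ℕ} (ht : t + 1 < d) : 0 < kk d s t := by
  have h1 := sR_lb hd hstep hlast t (by omega)
  have h2 := (sR_step hstep ht).2
  have h3 : ((t : ℝ) + 1) * sR d s (t + 1) ≤ ((t : ℝ) + 1) * (sR d s t + 1) :=
    mul_le_mul_of_nonneg_left h2 (by positivity)
  unfold kk
  nlinarith

lemma kk_ne (hd : 0 < d) (hpos : ∀ i, 0 < s i)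
    (hstep : ∀ i : Fin d, ∀ hi : (i : ℕ) + 1 < d,
      s i ≤ s ⟨(i : ℕ) + 1, hi⟩ ∧ s ⟨(i : ℕ) + 1, hi⟩ - s i ≤ 1)
    (hlast : s ⟨d - 1, Nat.sub_lt hd Nat.one_pos⟩ = d + 1)
    {t : ℕ} (ht : t + 1 < d) : kk d s t ≠ 0 :=
  ne_of_gt (kk_pos hd hpos hstep hlast ht)

lemma kk_cast {t : ℕ} (ht : t + 1 < d) :
    kk d s t = ((((t : ℤ) + 2) * (s ⟨t, by omega⟩ : ℤ)
      - ((t : ℤ) + 1) * (s ⟨t + 1, ht⟩ : ℤ) : ℤ) : ℝ) := by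
  unfold kk
  rw [sR_eq (show t < d by omega), sR_eq ht]
  push_cast; ring


lemma mem_Qset_iff {z : Fin d → ℝ} :
    z ∈ Qset d s ↔ (fun j : Fin d => z j + (((j : ℕ) : ℝ) + 1)) ∈ lectureHall d s := by
  constructor
  · rintro ⟨x, hx, rfl⟩
    have : (fun j : Fin d => x j - (((j : ℕ) : ℝ) + 1) + (((j : ℕ) : ℝ) + 1)) = x := by
      funext j; ring
    rwa [this]
  · intro h
    exact ⟨_, h, by funext j; ring⟩

lemma Qset_prop1 (hpos : ∀ i, 0 < s i) {z : Fin d → ℝ} (hz : z ∈ Qset d s) (h : 0 < d) :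
    -1 ≤ z ⟨0, h⟩ := by
  rw [mem_Qset_iff] at hz
  have h1 := hz.1 h
  have hs : (0 : ℝ) < (s ⟨0, h⟩ : ℝ) := by exact_mod_cast hpos _
  have := (le_div_iff₀ hs).mp h1
  simp only [Fin.val_mk] at this ⊢
  push_cast at this
  linarith

lemma Qset_prop2 (hpos : ∀ i, 0 < s i) {z : Fin d → ℝ} (hz : z ∈ Qset d s)
    {n : ℕ} (hn : n + 1 < d) :
    sR d s (n + 1) * (z ⟨n, by omega⟩ + ((n : ℝ) + 1)) ≤
      sR d s n * (z ⟨n + 1, hn⟩ + ((n : ℝ) + 2)) := by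
  rw [mem_Qset_iff] at hz
  have h1 := hz.2.1 ⟨n, by omega⟩ hn
  simp only [Fin.val_mk] at h1
  have hs1 : (0 : ℝ) < (s ⟨n, by omega⟩ : ℝ) := by exact_mod_cast hpos _
  have hs2 : (0 : ℝ) < (s ⟨n + 1, hn⟩ : ℝ) := by exact_mod_cast hpos _
  have h2 := (div_le_div_iff₀ hs1 hs2).mp h1
  rw [sR_eq (show n < d by omega), sR_eq hn]
  push_cast at h2 ⊢
  nlinarith [h2]

lemma Qset_prop3 (hd : 0 < d) (hpos : ∀ i, 0 < s i)
    (hlast : s ⟨d - 1, Nat.sub_lt hd Nat.one_pos⟩ = d + 1)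
    {z : Fin d → ℝ} (hz : z ∈ Qset d s) :
    z ⟨d - 1, Nat.sub_lt hd Nat.one_pos⟩ ≤ 1 := by
  rw [mem_Qset_iff] at hz
  have h1 := hz.2.2 hd
  have hs : (0 : ℝ) < (s ⟨d - 1, Nat.sub_lt hd Nat.one_pos⟩ : ℝ) := by exact_mod_cast hpos _
  have h2 := (div_le_one hs).mp h1
  rw [hlast] at h2
  simp only [Fin.val_mk] at h2
  have hc : ((d - 1 : ℕ) : ℝ) = (d : ℝ) - 1 := by
    have : (1 : ℕ) ≤ d := hd
    push_cast [Nat.cast_sub this]; ring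
  rw [hc] at h2
  push_cast at h2
  linarith

lemma u_mem_Qset (hpos : ∀ i, 0 < s i) (m : ℕ) : u d s m ∈ Qset d s := by
  rw [mem_Qset_iff]
  have hW : (fun j : Fin d => u d s m j + (((j : ℕ) : ℝ) + 1)) = W d s m := by
    funext j; simp [u, pv]
  rw [hW]
  have hsp : ∀ j : Fin d, (0 : ℝ) < (s j : ℝ) := fun j => by exact_mod_cast hpos j
  refine ⟨?_, ?_, ?_⟩
  · intro h
    apply div_nonneg _ (le_of_lt (hsp _))
    unfold W
    split
    · exact le_of_lt (sR_pos hpos _)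
    · exact le_refl 0
  · intro i hi
    by_cases hm : m ≤ (i : ℕ)
    · have h1 : W d s m i = sR d s i := if_pos hm
      have h2 : W d s m ⟨(i : ℕ) + 1, hi⟩ = sR d s ((i : ℕ) + 1) := if_pos (by simp; omega)
      rw [h1, h2, sR_eq i.isLt, sR_eq hi]
      have e1 : (⟨(i : ℕ), i.isLt⟩ : Fin d) = i := by simp
      rw [e1, div_self (ne_of_gt (hsp i)), div_self (ne_of_gt (hsp _))]
    · have h1 : W d s m i = 0 := if_neg hm
      rw [h1]
      rw [zero_div]
      apply div_nonneg _ (le_of_lt (hsp _))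
      unfold W; split
      · exact le_of_lt (sR_pos hpos _)
      · exact le_refl 0
  · intro h
    rw [div_le_one (hsp _)]
    unfold W
    split
    · rw [sR_eq (Nat.sub_lt h Nat.one_pos)]
    · exact le_of_lt (hsp _)

lemma ip_av0 (g : Fin d → ℝ) (h : 0 < d) :
    ∑ r, g r * av d s 0 r = -(g ⟨0, h⟩) := by
  rw [sum_one _ ⟨0, h⟩]
  · have : av d s 0 ⟨0, h⟩ = -1 := by
      unfold av; simp
    rw [this]; ring
  · intro k hk
    have hk' : (k : ℕ) ≠ 0 := fun hc => hk (by simp [Fin.ext_iff, hc])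
    have : av d s 0 k = 0 := by
      unfold av
      rw [if_neg (by omega), if_neg (by omega)]
    rw [this, mul_zero]

lemma ip_avd (g : Fin d → ℝ) (h : 0 < d) :
    ∑ r, g r * av d s d r = g ⟨d - 1, Nat.sub_lt h Nat.one_pos⟩ := by
  rw [sum_one _ ⟨d - 1, Nat.sub_lt h Nat.one_pos⟩]
  · have : av d s d ⟨d - 1, Nat.sub_lt h Nat.one_pos⟩ = 1 := by
      unfold av
      rw [if_pos (by simp; omega), if_neg (by omega)]
    rw [this]; ring
  · intro k hk
    have hk' : (k : ℕ) ≠ d - 1 := fun hc => hk (by simp [Fin.ext_iff, hc])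
    have hk2 : (k : ℕ) < d := k.isLt
    have : av d s d k = 0 := by
      unfold av
      rw [if_neg (by omega), if_neg (by omega)]
    rw [this, mul_zero]

lemma ip_avm {n : ℕ} (hn : n + 1 < d) (g : Fin d → ℝ) :
    ∑ r, g r * av d s (n + 1) r =
      g ⟨n, by omega⟩ * (sR d s (n + 1) / kk d s n)
        - g ⟨n + 1, hn⟩ * (sR d s n / kk d s n) := by
  rw [sum_two _ ⟨n, by omega⟩ ⟨n + 1, hn⟩ (by simp [Fin.ext_iff])]
  · have e1 : av d s (n + 1) ⟨n, by omega⟩ = sR d s (n + 1) / kk d s n := by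
      unfold av
      rw [if_pos (by simp), if_pos (by omega)]
      norm_num
    have e2 : av d s (n + 1) ⟨n + 1, hn⟩ = -(sR d s n / kk d s n) := by
      unfold av
      rw [if_neg (by simp), if_pos (by simp), if_neg (by omega)]
      simp
    rw [e1, e2]; ring
  · intro k hk1 hk2
    have h1 : (k : ℕ) ≠ n := fun hc => hk1 (by simp [Fin.ext_iff, hc])
    have h2 : (k : ℕ) ≠ n + 1 := fun hc => hk2 (by simp [Fin.ext_iff, hc])
    have : av d s (n + 1) k = 0 := by
      unfold av
      rw [if_neg (by omega), if_neg (by omega)]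
    rw [this, mul_zero]

lemma ip_W_diff {j : ℕ} (hj : j < d) (g : Fin d → ℝ) :
    (∑ r, u d s j r * g r) - (∑ r, u d s (j + 1) r * g r) = sR d s j * g ⟨j, hj⟩ := by
  rw [← Finset.sum_sub_distrib]
  rw [sum_one _ ⟨j, hj⟩]
  · have : u d s j ⟨j, hj⟩ - u d s (j + 1) ⟨j, hj⟩ = sR d s j := by
      unfold u W
      rw [if_pos (by simp), if_neg (by simp)]
      ring
    rw [show ∀ a b c : ℝ, a * c - b * c = (a - b) * c from fun a b c => by ring, this]
  · intro k hk
    have hk' : (k : ℕ) ≠ j := fun hc => hk (by simp [Fin.ext_iff, hc])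
    have : u d s j k - u d s (j + 1) k = 0 := by
      unfold u W
      by_cases h : j ≤ (k : ℕ)
      · rw [if_pos h, if_pos (by omega)]; ring
      · rw [if_neg h, if_neg (by omega)]; ring
    rw [show u d s j k * g k - u d s (j+1) k * g k = (u d s j k - u d s (j+1) k) * g k from by ring,
      this, zero_mul]

lemma ip_ud (g : Fin d → ℝ) :
    ∑ r, u d s d r * g r = -(∑ r : Fin d, (((r : ℕ) : ℝ) + 1) * g r) := by
  rw [← Finset.sum_neg_distrib]
  apply Finset.sum_congr rfl
  intro r _
  have : u d s d r = -(((r : ℕ) : ℝ) + 1) := by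
    unfold u W pv
    rw [if_neg (by have := r.isLt; omega)]
    ring
  rw [this]; ring

section WithHyps
variable (hd : 0 < d) (hpos : ∀ i, 0 < s i)
  (hstep : ∀ i : Fin d, ∀ hi : (i : ℕ) + 1 < d,
      s i ≤ s ⟨(i : ℕ) + 1, hi⟩ ∧ s ⟨(i : ℕ) + 1, hi⟩ - s i ≤ 1)
  (hlast : s ⟨d - 1, Nat.sub_lt hd Nat.one_pos⟩ = d + 1)

include hd hpos hstep hlast

lemma av_mem_dual {m : ℕ} (hm : m ≤ d) : av d s m ∈ dualPolytope (Qset d s) := by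
  intro z hz
  rcases Nat.eq_zero_or_pos m with hm0 | hm1
  · subst hm0
    rw [ip_av0 _ hd]
    have := Qset_prop1 hpos hz hd
    linarith
  rcases eq_or_lt_of_le hm with hmd | hmd
  · subst hmd
    rw [ip_avd _ hd]
    exact Qset_prop3 hd hpos hlast hz
  -- middle case
  obtain ⟨n, rfl⟩ : ∃ n, m = n + 1 := ⟨m - 1, by omega⟩
  have hn : n + 1 < d := hmd
  rw [ip_avm hn]
  have hkk := kk_pos hd hpos hstep hlast hn
  have hp2 := Qset_prop2 hpos hz hn
  rw [show z ⟨n, by omega⟩ * (sR d s (n + 1) / kk d s n)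
        - z ⟨n + 1, hn⟩ * (sR d s n / kk d s n)
      = (sR d s (n + 1) * (z ⟨n, by omega⟩ + ((n : ℝ) + 1))
          - sR d s n * (z ⟨n + 1, hn⟩ + ((n : ℝ) + 2)) + kk d s n) / kk d s n by
    unfold kk; field_simp; ring]
  rw [div_le_one hkk]
  linarith

lemma ip_u_av {n : ℕ} (hn : n + 1 < d) {j : ℕ} (hj : j ≤ d) (hne : j ≠ n + 1) :
    ∑ c, u d s j c * av d s (n + 1) c = 1 := by
  rw [ip_avm hn]
  have hkk := kk_ne hd hpos hstep hlast hn
  have e1 : u d s j ⟨n, by omega⟩ = (if j ≤ n then sR d s n else 0) - ((n : ℝ) + 1) := by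
    unfold u W pv; simp
  have e2 : u d s j ⟨n + 1, hn⟩ = (if j ≤ n + 1 then sR d s (n + 1) else 0) - ((n : ℝ) + 2) := by
    unfold u W pv; simp; ring
  rw [e1, e2]
  by_cases hjn : j ≤ n
  · rw [if_pos hjn, if_pos (by omega)]
    rw [← mul_div_assoc, ← mul_div_assoc, div_sub_div_same, div_eq_one_iff_eq hkk]; unfold kk; ring
  · rw [if_neg hjn, if_neg (by omega)]
    rw [← mul_div_assoc, ← mul_div_assoc, div_sub_div_same, div_eq_one_iff_eq hkk]; unfold kk; ring

end WithHyps


lemma int_div_cast {A B : ℤ} (h : (B : ℝ) ≠ 0) (hdvd : B ∣ A) :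
    ∃ c : ℤ, (A : ℝ) / (B : ℝ) = c := by
  obtain ⟨c, rfl⟩ := hdvd
  refine ⟨c, ?_⟩
  push_cast
  rw [mul_comm, mul_div_assoc, div_self h, mul_one]

lemma av_lattice
    (hdvd : ∀ i : Fin d, ∀ hi : (i : ℕ) + 1 < d,
        ((((i : ℕ) : ℤ) + 2) * (s i : ℤ) - (((i : ℕ) : ℤ) + 1) * (s ⟨(i : ℕ) + 1, hi⟩ : ℤ))
            ∣ (s i : ℤ) ∧
        ((((i : ℕ) : ℤ) + 2) * (s i : ℤ) - (((i : ℕ) : ℤ) + 1) * (s ⟨(i : ℕ) + 1, hi⟩ : ℤ))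
            ∣ (s ⟨(i : ℕ) + 1, hi⟩ : ℤ))
    (hd : 0 < d) (hpos : ∀ i, 0 < s i)
    (hstep : ∀ i : Fin d, ∀ hi : (i : ℕ) + 1 < d,
      s i ≤ s ⟨(i : ℕ) + 1, hi⟩ ∧ s ⟨(i : ℕ) + 1, hi⟩ - s i ≤ 1)
    (hlast : s ⟨d - 1, Nat.sub_lt hd Nat.one_pos⟩ = d + 1)
    {m : ℕ} (hm : m ≤ d) : av d s m ∈ latticePoints d := by
  have main : ∀ n (hn : n + 1 < d),
      (∃ c : ℤ, sR d s (n + 1) / kk d s n = (c : ℝ)) ∧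
      (∃ c : ℤ, sR d s n / kk d s n = (c : ℝ)) := by
    intro n hn
    have hkk : (((((n : ℤ) + 2) * (s ⟨n, by omega⟩ : ℤ)
        - ((n : ℤ) + 1) * (s ⟨n + 1, hn⟩ : ℤ)) : ℤ) : ℝ) ≠ 0 := by
      rw [← kk_cast hn]; exact kk_ne hd hpos hstep hlast hn
    have hK := hdvd ⟨n, by omega⟩ (by simpa using hn)
    simp only [Fin.val_mk] at hK
    constructor
    · obtain ⟨c, hc⟩ := int_div_cast hkk hK.2
      exact ⟨c, by rw [sR_eq hn, kk_cast hn]; exact_mod_cast hc⟩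
    · obtain ⟨c, hc⟩ := int_div_cast hkk hK.1
      exact ⟨c, by rw [sR_eq (show n < d by omega), kk_cast hn]; exact_mod_cast hc⟩
  intro r
  unfold av
  by_cases h1 : (r : ℕ) + 1 = m
  · rw [if_pos h1]
    by_cases h2 : m < d
    · rw [if_pos h2]
      obtain ⟨n, rfl⟩ : ∃ n, m = n + 1 := ⟨(r : ℕ), by omega⟩
      simp only [Nat.add_sub_cancel]
      exact (main n h2).1
    · rw [if_neg h2]; exact ⟨1, by norm_num⟩
  · rw [if_neg h1]
    by_cases h3 : (r : ℕ) = m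
    · rw [if_pos h3]
      by_cases h4 : m = 0
      · rw [if_pos h4]; exact ⟨-1, by norm_num⟩
      · rw [if_neg h4]
        obtain ⟨n, rfl⟩ : ∃ n, m = n + 1 := ⟨m - 1, by omega⟩
        have hn : n + 1 < d := by have := r.isLt; omega
        simp only [Nat.add_sub_cancel]
        obtain ⟨c, hc⟩ := (main n hn).2
        exact ⟨-c, by rw [hc]; push_cast; ring⟩
    · rw [if_neg h3]; exact ⟨0, by norm_num⟩

section MuSec
variable (hd : 0 < d) (hpos : ∀ i, 0 < s i)
  (hstep : ∀ i : Fin d, ∀ hi : (i : ℕ) + 1 < d,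
      s i ≤ s ⟨(i : ℕ) + 1, hi⟩ ∧ s ⟨(i : ℕ) + 1, hi⟩ - s i ≤ 1)
  (hlast : s ⟨d - 1, Nat.sub_lt hd Nat.one_pos⟩ = d + 1)
include hd hpos hstep hlast

lemma muv_nonneg {m : ℕ} (hm : m ≤ d) : 0 ≤ muv d s m := by
  unfold muv
  split
  · have := sR_pos (s := s) hpos 0
    positivity
  · split
    · rename_i ha hb
      have hn : (m - 1) + 1 < d := by omega
      have hk := le_of_lt (kk_pos hd hpos hstep hlast hn)
      have hs1 := le_of_lt (sR_pos (s := s) hpos (m - 1))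
      have hs2 := le_of_lt (sR_pos (s := s) hpos m)
      exact div_nonneg hk (mul_nonneg hs1 hs2)
    · positivity

omit hd hpos hstep hlast in
lemma muv_mid {n : ℕ} (hn : n + 1 < d) :
    muv d s (n + 1) = kk d s n / (sR d s n * sR d s (n + 1)) := by
  unfold muv
  rw [if_neg (by omega), if_pos hn]
  norm_num

lemma mu_partial : ∀ n, (hn : n < d) →
    ∑ m : Fin (d + 1), (if (m : ℕ) ≤ n then muv d s (m : ℕ) else 0)
      = ((n : ℝ) + 1) / sR d s n := by
  intro n
  induction n with
  | zero =>
    intro hn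
    rw [sum_one _ ⟨0, by omega⟩]
    · simp [muv]
    · intro k hk
      have : (k : ℕ) ≠ 0 := fun hc => hk (by simp [Fin.ext_iff, hc])
      rw [if_neg (by omega)]
  | succ n ih =>
    intro hn
    have hsplit : ∀ m : Fin (d + 1),
        (if (m : ℕ) ≤ n + 1 then muv d s (m : ℕ) else 0)
          = (if (m : ℕ) ≤ n then muv d s (m : ℕ) else 0)
            + (if (m : ℕ) = n + 1 then muv d s (m : ℕ) else 0) := by
      intro m
      by_cases h1 : (m : ℕ) ≤ n
      · rw [if_pos (by omega), if_pos h1, if_neg (by omega), add_zero]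
      · by_cases h2 : (m : ℕ) = n + 1
        · rw [if_pos (by omega), if_neg h1, if_pos h2, zero_add]
        · rw [if_neg (by omega), if_neg h1, if_neg h2, add_zero]
    rw [Finset.sum_congr rfl (fun m _ => hsplit m), Finset.sum_add_distrib,
      ih (by omega)]
    rw [sum_one _ ⟨n + 1, by omega⟩]
    · simp only [Fin.val_mk, if_pos rfl, if_true]
      rw [muv_mid hn]
      have e1 := sR_ne (s := s) hpos n
      have e2 := sR_ne (s := s) hpos (n + 1)
      unfold kk
      rw [div_add_div _ _ e1 (mul_ne_zero e1 e2), div_eq_div_iff (mul_ne_zero e1 (mul_ne_zero e1 e2)) e2]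
      push_cast
      ring
    · intro k hk
      have : (k : ℕ) ≠ n + 1 := fun hc => hk (by simp [Fin.ext_iff, hc])
      rw [if_neg this]

lemma mu_total : ∑ m : Fin (d + 1), muv d s (m : ℕ) = 1 := by
  have hsplit : ∀ m : Fin (d + 1),
      muv d s (m : ℕ) = (if (m : ℕ) ≤ d - 1 then muv d s (m : ℕ) else 0)
        + (if (m : ℕ) = d then muv d s (m : ℕ) else 0) := by
    intro m
    have := m.isLt
    by_cases h1 : (m : ℕ) ≤ d - 1
    · rw [if_pos h1, if_neg (by omega), add_zero]
    · rw [if_neg h1, if_pos (by omega), zero_add]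
  rw [Finset.sum_congr rfl (fun m _ => hsplit m), Finset.sum_add_distrib,
    mu_partial hd hpos hstep hlast (d - 1) (by omega)]
  rw [sum_one _ ⟨d, by omega⟩]
  · simp only [Fin.val_mk, if_pos rfl, if_true]
    have hmu : muv d s d = 1 / ((d : ℝ) + 1) := by
      unfold muv; rw [if_neg (by omega), if_neg (by omega)]
    rw [hmu, sR_last hd hlast]
    have hc : ((d - 1 : ℕ) : ℝ) = (d : ℝ) - 1 := by
      have : (1 : ℕ) ≤ d := hd
      push_cast [Nat.cast_sub this]; ring
    rw [hc]
    have : (d : ℝ) + 1 ≠ 0 := by positivity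
    field_simp
    ring
  · intro k hk
    have : (k : ℕ) ≠ d := fun hc => hk (by simp [Fin.ext_iff, hc])
    rw [if_neg this]

end MuSec

lemma dual_convex {Q : Set (Fin d → ℝ)} : Convex ℝ (dualPolytope Q) := by
  intro y1 h1 y2 h2 a b ha hb hab
  intro x hx
  have e : ∀ i : Fin d, x i * (a • y1 + b • y2) i = a * (x i * y1 i) + b * (x i * y2 i) := by
    intro i
    simp only [Pi.add_apply, Pi.smul_apply, smul_eq_mul]
    ring
  rw [Finset.sum_congr rfl (fun i _ => e i), Finset.sum_add_distrib,
    ← Finset.mul_sum, ← Finset.mul_sum]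
  have l1 := h1 x hx
  have l2 := h2 x hx
  nlinarith

section Main
variable (hd : 0 < d) (hpos : ∀ i, 0 < s i)
  (hstep : ∀ i : Fin d, ∀ hi : (i : ℕ) + 1 < d,
      s i ≤ s ⟨(i : ℕ) + 1, hi⟩ ∧ s ⟨(i : ℕ) + 1, hi⟩ - s i ≤ 1)
  (hlast : s ⟨d - 1, Nat.sub_lt hd Nat.one_pos⟩ = d + 1)
include hd hpos hstep hlast

lemma backward
    (hdvd : ∀ i : Fin d, ∀ hi : (i : ℕ) + 1 < d,
        ((((i : ℕ) : ℤ) + 2) * (s i : ℤ) - (((i : ℕ) : ℤ) + 1) * (s ⟨(i : ℕ) + 1, hi⟩ : ℤ))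
            ∣ (s i : ℤ) ∧
        ((((i : ℕ) : ℤ) + 2) * (s i : ℤ) - (((i : ℕ) : ℤ) + 1) * (s ⟨(i : ℕ) + 1, hi⟩ : ℤ))
            ∣ (s ⟨(i : ℕ) + 1, hi⟩ : ℤ)) :
    dualPolytope (Qset d s)
      = convexHull ℝ (dualPolytope (Qset d s) ∩ latticePoints d) := by
  apply Set.Subset.antisymm
  · intro y hy
    set lam : Fin (d + 1) → ℝ :=
      fun m => muv d s (m : ℕ) * (1 - ∑ r, u d s (m : ℕ) r * y r) with hlam
    have hle : ∀ m : ℕ, ∑ r, u d s m r * y r ≤ 1 := fun m => hy _ (u_mem_Qset hpos m)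
    have hlam0 : ∀ m : Fin (d + 1), 0 ≤ lam m := by
      intro m
      apply mul_nonneg (muv_nonneg hd hpos hstep hlast (by omega : (m : ℕ) ≤ d))
      linarith [hle (m : ℕ)]
    -- sum of weights is 1
    have hWsum : ∀ m : ℕ, ∑ r, W d s m r * y r
        = ∑ r : Fin d, (if m ≤ (r : ℕ) then muv d s 0 * 0 + sR d s r * y r else 0) := by
      intro m
      apply Finset.sum_congr rfl
      intro r _
      unfold W
      split <;> simp
    have hswap : ∑ m : Fin (d + 1), muv d s (m : ℕ) * (∑ r, W d s (m : ℕ) r * y r)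
        = ∑ r : Fin d, (((r : ℕ) : ℝ) + 1) * y r := by
      have e1 : ∀ m : Fin (d + 1), muv d s (m : ℕ) * (∑ r, W d s (m : ℕ) r * y r)
          = ∑ r : Fin d, (if (m : ℕ) ≤ (r : ℕ) then muv d s (m : ℕ) else 0) * (sR d s r * y r) := by
        intro m
        rw [Finset.mul_sum]
        apply Finset.sum_congr rfl
        intro r _
        unfold W
        split <;> simp <;> ring
      rw [Finset.sum_congr rfl (fun m _ => e1 m), Finset.sum_comm]
      apply Finset.sum_congr rfl
      intro r _
      rw [← Finset.sum_mul, mu_partial hd hpos hstep hlast (r : ℕ) r.isLt]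
      have := sR_ne (s := s) hpos (r : ℕ)
      field_simp
    have hsum : ∑ m, lam m = 1 := by
      have e : ∀ m : Fin (d + 1), lam m
          = muv d s (m : ℕ) + muv d s (m : ℕ) * (∑ r : Fin d, (((r : ℕ) : ℝ) + 1) * y r)
            - muv d s (m : ℕ) * (∑ r, W d s (m : ℕ) r * y r) := by
        intro m
        have hlm : lam m = muv d s (m : ℕ) * (1 - ∑ r, u d s (m : ℕ) r * y r) := rfl
        rw [hlm]
        have : ∀ r : Fin d, u d s (m : ℕ) r * y r
            = W d s (m : ℕ) r * y r - ((((r : ℕ) : ℝ) + 1)) * y r := by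
          intro r; unfold u pv; ring
        rw [Finset.sum_congr rfl (fun r _ => this r), Finset.sum_sub_distrib]
        ring
      rw [Finset.sum_congr rfl (fun m _ => e m)]
      rw [Finset.sum_sub_distrib, Finset.sum_add_distrib, ← Finset.sum_mul]
      rw [hswap, mu_total hd hpos hstep hlast]
      ring
    have hrep : ∑ m : Fin (d + 1), lam m • av d s (m : ℕ) = y := by
      funext r
      rw [Finset.sum_apply]
      have hr1 : ((r : ℕ) + 1) < d + 1 := by have := r.isLt; omega
      have hr2 : ((r : ℕ)) < d + 1 := by omega
      rw [sum_two _ ⟨(r : ℕ) + 1, hr1⟩ ⟨(r : ℕ), hr2⟩ (by simp [Fin.ext_iff])]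
      · simp only [Pi.smul_apply, smul_eq_mul, Fin.val_mk]
        have hsne := sR_ne (s := s) hpos (r : ℕ)
        have e1 : muv d s ((r : ℕ) + 1) * av d s ((r : ℕ) + 1) r = 1 / sR d s (r : ℕ) := by
          by_cases hrd : (r : ℕ) + 1 < d
          · rw [muv_mid hrd]
            have : av d s ((r : ℕ) + 1) r = sR d s ((r : ℕ) + 1) / kk d s (r : ℕ) := by
              unfold av
              rw [if_pos rfl, if_pos hrd]
              norm_num
            rw [this]
            have := kk_ne hd hpos hstep hlast hrd
            have := sR_ne (s := s) hpos ((r : ℕ) + 1)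
            field_simp
          · have hrd' : (r : ℕ) + 1 = d := by have := r.isLt; omega
            have : av d s ((r : ℕ) + 1) r = 1 := by
              unfold av
              rw [if_pos rfl, if_neg (by omega)]
            rw [this, mul_one]
            unfold muv
            rw [if_neg (by omega), if_neg (by omega)]
            have : (r : ℕ) = d - 1 := by omega
            rw [this, sR_last hd hlast]
        have e2 : muv d s (r : ℕ) * av d s (r : ℕ) r = -(1 / sR d s (r : ℕ)) := by
          by_cases hr0 : (r : ℕ) = 0
          · have : av d s (r : ℕ) r = -1 := by
              unfold av
              rw [if_neg (by omega), if_pos rfl, if_pos hr0]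
            rw [this, hr0]
            unfold muv
            rw [if_pos rfl]
            ring
          · obtain ⟨n, hn⟩ : ∃ n, (r : ℕ) = n + 1 := ⟨(r : ℕ) - 1, by omega⟩
            have hnd : n + 1 < d := by have := r.isLt; omega
            have : av d s (r : ℕ) r = -(sR d s n / kk d s n) := by
              unfold av
              rw [if_neg (by omega), if_pos rfl, if_neg hr0, hn]
              simp
            rw [this, hn, muv_mid hnd]
            have := kk_ne hd hpos hstep hlast hnd
            have h1 := sR_ne (s := s) hpos n
            have h2 := sR_ne (s := s) hpos (n + 1)
            field_simp
        have hdiff := ip_W_diff (s := s) r.isLt y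
        have hre : (⟨(r : ℕ), r.isLt⟩ : Fin d) = r := by simp
        rw [hre] at hdiff
        calc lam ⟨(r : ℕ) + 1, hr1⟩ * av d s ((r : ℕ) + 1) r
              + lam ⟨(r : ℕ), hr2⟩ * av d s (r : ℕ) r
            = (muv d s ((r : ℕ) + 1) * av d s ((r : ℕ) + 1) r)
                * (1 - ∑ c, u d s ((r : ℕ) + 1) c * y c)
              + (muv d s (r : ℕ) * av d s (r : ℕ) r)
                * (1 - ∑ c, u d s (r : ℕ) c * y c) := by
              have g1 : lam ⟨(r : ℕ) + 1, hr1⟩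
                  = muv d s ((r : ℕ) + 1) * (1 - ∑ c, u d s ((r : ℕ) + 1) c * y c) := rfl
              have g2 : lam ⟨(r : ℕ), hr2⟩
                  = muv d s (r : ℕ) * (1 - ∑ c, u d s (r : ℕ) c * y c) := rfl
              rw [g1, g2]; ring
          _ = (1 / sR d s (r : ℕ)) * ((∑ c, u d s (r : ℕ) c * y c)
                - (∑ c, u d s ((r : ℕ) + 1) c * y c)) := by
              rw [e1, e2]; ring
          _ = y r := by
              rw [hdiff]
              field_simp
      · intro k hk1 hk2
        have h1 : (k : ℕ) ≠ (r : ℕ) + 1 := fun hc => hk1 (by simp [Fin.ext_iff, hc])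
        have h2 : (k : ℕ) ≠ (r : ℕ) := fun hc => hk2 (by simp [Fin.ext_iff, hc])
        have : av d s (k : ℕ) r = 0 := by
          unfold av
          rw [if_neg (by omega), if_neg (by omega)]
        simp [this]
    rw [← hrep]
    have hmem : ∀ m : Fin (d + 1), av d s (m : ℕ) ∈
        dualPolytope (Qset d s) ∩ latticePoints d := by
      intro m
      exact ⟨av_mem_dual hd hpos hstep hlast (by omega : (m : ℕ) ≤ d),
        av_lattice hdvd hd hpos hstep hlast (by omega : (m : ℕ) ≤ d)⟩
    have hc := Finset.centerMass_mem_convexHull (t := (Finset.univ : Finset (Fin (d + 1))))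
      (w := lam) (fun m _ => hlam0 m) (by rw [hsum]; norm_num)
      (z := fun m : Fin (d + 1) => av d s (m : ℕ)) (fun m _ => hmem m)
    rwa [Finset.centerMass_eq_of_sum_1 _ _ hsum] at hc
  · exact convexHull_min Set.inter_subset_left dual_convex

end Main

lemma eq_one_extract {ι : Type*} (t : Finset ι) (w c : ι → ℝ)
    (h0 : ∀ i ∈ t, 0 ≤ w i) (h1 : ∑ i ∈ t, w i = 1)
    (hc : ∀ i ∈ t, c i ≤ 1) (hs : ∑ i ∈ t, w i * c i = 1) :
    ∀ i ∈ t, 0 < w i → c i = 1 := by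
  have hz : ∑ i ∈ t, w i * (1 - c i) = 0 := by
    have e : ∀ i ∈ t, w i * (1 - c i) = w i - w i * c i := fun i _ => by ring
    rw [Finset.sum_congr rfl e, Finset.sum_sub_distrib, h1, hs, sub_self]
  have hnn : ∀ i ∈ t, 0 ≤ w i * (1 - c i) := fun i hi =>
    mul_nonneg (h0 i hi) (by linarith [hc i hi])
  have hall := (Finset.sum_eq_zero_iff_of_nonneg hnn).mp hz
  intro i hi hwi
  have hzi := hall i hi
  rcases mul_eq_zero.mp hzi with h | h
  · linarith
  · linarith

section Fwd
variable (hd : 0 < d) (hpos : ∀ i, 0 < s i)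
  (hstep : ∀ i : Fin d, ∀ hi : (i : ℕ) + 1 < d,
      s i ≤ s ⟨(i : ℕ) + 1, hi⟩ ∧ s ⟨(i : ℕ) + 1, hi⟩ - s i ≤ 1)
  (hlast : s ⟨d - 1, Nat.sub_lt hd Nat.one_pos⟩ = d + 1)
include hd hpos hstep hlast

lemma forward
    (hdual : dualPolytope (Qset d s)
      = convexHull ℝ (dualPolytope (Qset d s) ∩ latticePoints d)) :
    ∀ i : Fin d, ∀ hi : (i : ℕ) + 1 < d,
        ((((i : ℕ) : ℤ) + 2) * (s i : ℤ) - (((i : ℕ) : ℤ) + 1) * (s ⟨(i : ℕ) + 1, hi⟩ : ℤ))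
            ∣ (s i : ℤ) ∧
        ((((i : ℕ) : ℤ) + 2) * (s i : ℤ) - (((i : ℕ) : ℤ) + 1) * (s ⟨(i : ℕ) + 1, hi⟩ : ℤ))
            ∣ (s ⟨(i : ℕ) + 1, hi⟩ : ℤ) := by
  intro i hi
  set n := (i : ℕ) with hn
  have hn1 : n + 1 < d := hi
  suffices hS : ((((n : ℕ) : ℤ) + 2) * (s ⟨n, by omega⟩ : ℤ)
        - (((n : ℕ) : ℤ) + 1) * (s ⟨n + 1, hn1⟩ : ℤ)) ∣ (s ⟨n, by omega⟩ : ℤ) ∧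
      ((((n : ℕ) : ℤ) + 2) * (s ⟨n, by omega⟩ : ℤ)
        - (((n : ℕ) : ℤ) + 1) * (s ⟨n + 1, hn1⟩ : ℤ)) ∣ (s ⟨n + 1, hn1⟩ : ℤ) by
    exact hS
  have hv : av d s (n + 1) ∈ convexHull ℝ (dualPolytope (Qset d s) ∩ latticePoints d) := by
    rw [← hdual]
    exact av_mem_dual hd hpos hstep hlast (by omega)
  rw [_root_.convexHull_eq] at hv
  obtain ⟨ι, t, w, zf, hw0, hw1, hzS, hcm⟩ := hv
  rw [Finset.centerMass_eq_of_sum_1 _ _ hw1] at hcm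
  obtain ⟨r0, hr0t, hr0⟩ : ∃ r0 ∈ t, (0 : ℝ) < w r0 := by
    by_contra hcon
    push_neg at hcon
    have : ∑ i ∈ t, w i ≤ 0 := Finset.sum_nonpos hcon
    linarith
  set z := zf r0 with hzdef
  have hzdual : z ∈ dualPolytope (Qset d s) := (hzS r0 hr0t).1
  have hzlat : z ∈ latticePoints d := (hzS r0 hr0t).2
  have hkey : ∀ j : ℕ, j ≤ d → j ≠ n + 1 → ∑ c, u d s j c * z c = 1 := by
    intro j hj hjne
    have hval : ∑ c, u d s j c * av d s (n + 1) c = 1 :=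
      ip_u_av hd hpos hstep hlast hn1 hj hjne
    have hlin : ∑ r ∈ t, w r * (∑ c, u d s j c * zf r c)
        = ∑ c, u d s j c * av d s (n + 1) c := by
      rw [← hcm]
      have e1 : ∀ c : Fin d, u d s j c * (∑ r ∈ t, w r • zf r) c
          = ∑ r ∈ t, w r * (u d s j c * zf r c) := by
        intro c
        rw [Finset.sum_apply, Finset.mul_sum]
        apply Finset.sum_congr rfl
        intro r _
        simp only [Pi.smul_apply, smul_eq_mul]
        ring
      rw [Finset.sum_congr rfl (fun c _ => e1 c), Finset.sum_comm]
      apply Finset.sum_congr rfl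
      intro r _
      rw [Finset.mul_sum]
    have hsum_j : ∑ r ∈ t, w r * (∑ c, u d s j c * zf r c) = 1 := hlin.trans hval
    have hle : ∀ r ∈ t, (∑ c, u d s j c * zf r c) ≤ 1 := fun r hr =>
      (hzS r hr).1 _ (u_mem_Qset hpos j)
    exact eq_one_extract t w _ hw0 hw1 hle hsum_j r0 hr0t hr0
  have hz0 : ∀ c : Fin d, (c : ℕ) ≠ n → (c : ℕ) ≠ n + 1 → z c = 0 := by
    intro c hc1 hc2
    have e1 := hkey (c : ℕ) (by omega) hc2
    have e2 := hkey ((c : ℕ) + 1) (by have := c.isLt; omega) (by omega)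
    have hdiff := ip_W_diff (s := s) c.isLt z
    have hre : (⟨(c : ℕ), c.isLt⟩ : Fin d) = c := by simp
    rw [hre] at hdiff
    have hsne := sR_ne (s := s) hpos (c : ℕ)
    have hzero : sR d s (c : ℕ) * z c = 0 := by rw [← hdiff, e1, e2]; ring
    rcases mul_eq_zero.mp hzero with h | h
    · exact absurd h hsne
    · exact h
  have hA : sR d s n * z ⟨n, by omega⟩ + sR d s (n + 1) * z ⟨n + 1, hn1⟩ = 0 := by
    have e1 := hkey n (by omega) (by omega)
    have e2 := hkey (n + 2) (by omega) (by omega)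
    have d1 := ip_W_diff (s := s) (show n < d by omega) z
    have d2 := ip_W_diff (s := s) hn1 z
    linarith [d1, d2, e1, e2]
  have hB : ((n : ℝ) + 1) * z ⟨n, by omega⟩ + ((n : ℝ) + 2) * z ⟨n + 1, hn1⟩ = -1 := by
    have e := hkey d (le_refl d) (by omega)
    rw [ip_ud] at e
    have h2 : ∑ c : Fin d, (((c : ℕ) : ℝ) + 1) * z c = -1 := by linarith
    rw [sum_two _ ⟨n, by omega⟩ ⟨n + 1, hn1⟩ (by simp [Fin.ext_iff])] at h2
    · simp only [Fin.val_mk] at h2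
      push_cast at h2
      linarith
    · intro k hk1 hk2
      have g1 : (k : ℕ) ≠ n := fun hc => hk1 (by simp [Fin.ext_iff, hc])
      have g2 : (k : ℕ) ≠ n + 1 := fun hc => hk2 (by simp [Fin.ext_iff, hc])
      rw [hz0 k g1 g2, mul_zero]
  have hkkne := kk_ne hd hpos hstep hlast hn1
  have hv2 : kk d s n * z ⟨n + 1, hn1⟩ = -(sR d s n) := by
    unfold kk
    linear_combination sR d s n * hB - ((n : ℝ) + 1) * hA
  have hv1 : kk d s n * z ⟨n, by omega⟩ = sR d s (n + 1) := by
    have hsne := sR_ne (s := s) hpos n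
    apply mul_left_cancel₀ hsne
    unfold kk at hv2 ⊢
    linear_combination (((n : ℝ) + 2) * sR d s n - ((n : ℝ) + 1) * sR d s (n + 1)) * hA
      - sR d s (n + 1) * hv2
  obtain ⟨a, ha⟩ := hzlat ⟨n, by omega⟩
  obtain ⟨b, hb⟩ := hzlat ⟨n + 1, hn1⟩
  rw [kk_cast hn1, sR_eq hn1, ha] at hv1
  rw [kk_cast hn1, sR_eq (show n < d by omega), hb] at hv2
  have i1 : ((((n : ℤ) + 2) * (s ⟨n, by omega⟩ : ℤ) - ((n : ℤ) + 1) * (s ⟨n + 1, hn1⟩ : ℤ)) * a : ℤ)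
      = (s ⟨n + 1, hn1⟩ : ℤ) := by exact_mod_cast hv1
  have i2 : ((((n : ℤ) + 2) * (s ⟨n, by omega⟩ : ℤ) - ((n : ℤ) + 1) * (s ⟨n + 1, hn1⟩ : ℤ)) * b : ℤ)
      = -(s ⟨n, by omega⟩ : ℤ) := by exact_mod_cast hv2
  constructor
  · exact ⟨-b, by rw [mul_neg, i2, neg_neg]⟩
  · exact ⟨a, i1.symm⟩

end Fwd

end Stmt11Aux


/-- for weakly increasing `s` with steps at most 1 and
`s_d = d + 1`, with `Q = P_d^(s) - p` where `p = (1, 2, …, d)`, the dual `Q^∨`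
is a lattice polytope iff `k_i = (i+1) s_i - i s_{i+1}` divides `s_i` and
`s_{i+1}` for all `1 ≤ i ≤ d-1`. -/
theorem stmt_11 (d : ℕ) (hd : 0 < d) (s : Fin d → ℕ) (hpos : ∀ i, 0 < s i)
    (hstep : ∀ i : Fin d, ∀ hi : (i : ℕ) + 1 < d,
      s i ≤ s ⟨(i : ℕ) + 1, hi⟩ ∧ s ⟨(i : ℕ) + 1, hi⟩ - s i ≤ 1)
    (hlast : s ⟨d - 1, Nat.sub_lt hd Nat.one_pos⟩ = d + 1) :
    (dualPolytope ((fun x (j : Fin d) => x j - (((j : ℕ) : ℝ) + 1)) ''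
          lectureHall d s) =
        convexHull ℝ
          (dualPolytope ((fun x (j : Fin d) => x j - (((j : ℕ) : ℝ) + 1)) ''
              lectureHall d s) ∩ latticePoints d)) ↔
      ∀ i : Fin d, ∀ hi : (i : ℕ) + 1 < d,
        ((((i : ℕ) : ℤ) + 2) * (s i : ℤ) - (((i : ℕ) : ℤ) + 1) * (s ⟨(i : ℕ) + 1, hi⟩ : ℤ))
            ∣ (s i : ℤ) ∧
        ((((i : ℕ) : ℤ) + 2) * (s i : ℤ) - (((i : ℕ) : ℤ) + 1) * (s ⟨(i : ℕ) + 1, hi⟩ : ℤ))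
            ∣ (s ⟨(i : ℕ) + 1, hi⟩ : ℤ) := by
  
  constructor
  · intro h
    exact Stmt11Aux.forward hd hpos hstep hlast h
  · intro h
    exact Stmt11Aux.backward hd hpos hstep hlast h
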